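/- Let Δ : [0,1] → ℝ be measurable with Δ* ≤ Δ(u) for all u, Δ* > 0, satisfying the measure condition with constant C. Then for any p ∈ (1,2), the normalization constant c_p = ∫₀¹ Δ(u)^(−p) du satisfies c_p ≤ (C·p/(p−1)) · Δ*^(−(p−1)). -/

import Mathlib

open MeasureTheory Set

/-- Bound on the power-law normalization constant `c_p = ∫₀¹ Δ(u)^(−p) du` under the
measure condition. -/
theorem normalization_constant_bound (Δ : ℝ → ℝ) (Δstar C p : ℝ)
    (hmeas : Measurable Δ)
    (hlow : ∀ u ∈ Icc (0:ℝ) 1, Δstar ≤ Δ u)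
    (hΔstar : 0 < Δstar) (hC : 0 < C)
    (hmc : ∀ x > (0:ℝ), (volume {u ∈ Icc (0:ℝ) 1 | Δ u ≤ x}).toReal ≤ C * x)
    (hp : p ∈ Ioo (1:ℝ) 2) :
    ∫ u in (0:ℝ)..1, Δ u ^ (-p) ≤ (C * p / (p - 1)) * Δstar ^ (-(p - 1)) := by
  obtain ⟨hp1, hp2⟩ := hp
  have hp0 : 0 < p := by linarith
  set M : ℝ := Δstar ^ (-p) with hMdef
  have hM : 0 < M := Real.rpow_pos_of_pos hΔstar _
  set f : ℝ → ℝ := fun u => Δ u ^ (-p) with hfdef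
  have hfm : Measurable f := hmeas.pow measurable_const
  have key : ∀ u ∈ Ioc (0:ℝ) 1, 0 ≤ f u ∧ f u ≤ M := by
    intro u hu
    have hΔu : Δstar ≤ Δ u := hlow u (Ioc_subset_Icc_self hu)
    have hΔpos : 0 < Δ u := lt_of_lt_of_le hΔstar hΔu
    refine ⟨(Real.rpow_pos_of_pos hΔpos _).le, ?_⟩
    exact Real.rpow_le_rpow_of_nonpos hΔstar hΔu (by linarith)
  have hnn : 0 ≤ᵐ[volume.restrict (Ioc (0:ℝ) 1)] f := by
    rw [Filter.EventuallyLE, ae_restrict_iff' measurableSet_Ioc]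
    exact Filter.Eventually.of_forall fun u hu => (key u hu).1
  have hbdd : f ≤ᵐ[volume.restrict (Ioc (0:ℝ) 1)] fun _ => M := by
    rw [Filter.EventuallyLE, ae_restrict_iff' measurableSet_Ioc]
    exact Filter.Eventually.of_forall fun u hu => (key u hu).2
  have hint : IntegrableOn f (Ioc (0:ℝ) 1) := by
    refine Integrable.mono' (integrable_const M) hfm.aestronglyMeasurable ?_
    rw [ae_restrict_iff' measurableSet_Ioc]
    refine Filter.Eventually.of_forall fun u hu => ?_
    rw [Real.norm_eq_abs, abs_of_nonneg (key u hu).1]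
    exact (key u hu).2
  rw [intervalIntegral.integral_of_le zero_le_one]
  rw [hint.integral_eq_integral_Ioc_meas_le hnn hbdd]
  have hr : (-1:ℝ) < -p⁻¹ := by
    rw [neg_lt_neg_iff]
    exact inv_lt_one_of_one_lt₀ hp1
  have tail_bound : ∀ t ∈ Ioc (0:ℝ) M,
      ((volume.restrict (Ioc (0:ℝ) 1)) {a | t ≤ f a}).toReal ≤ C * t ^ (-p⁻¹) := by
    intro t ht
    have htpos : 0 < t := ht.1
    have hx : 0 < t ^ (-p⁻¹) := Real.rpow_pos_of_pos htpos _
    have hsub : {a | t ≤ f a} ∩ Ioc 0 1 ⊆ {u ∈ Icc (0:ℝ) 1 | Δ u ≤ t ^ (-p⁻¹)} := by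
      rintro a ⟨ha, ha01⟩
      have hΔpos : 0 < Δ a := lt_of_lt_of_le hΔstar (hlow a (Ioc_subset_Icc_self ha01))
      refine ⟨Ioc_subset_Icc_self ha01, ?_⟩
      have h1 : (Δ a ^ (-p)) ^ (-p⁻¹) ≤ t ^ (-p⁻¹) :=
        Real.rpow_le_rpow_of_nonpos htpos ha (by simp [inv_nonneg, hp0.le])
      rwa [← Real.rpow_mul hΔpos.le, neg_mul_neg, mul_inv_cancel₀ hp0.ne',
        Real.rpow_one] at h1
    have hmble : MeasurableSet {a | t ≤ f a} := measurableSet_le measurable_const hfm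
    rw [Measure.restrict_apply hmble]
    refine le_trans (ENNReal.toReal_mono ?_ (measure_mono hsub)) (hmc _ hx)
    refine ne_of_lt (lt_of_le_of_lt (measure_mono (fun u hu => hu.1)) ?_)
    simp [Real.volume_Icc]
  have hgint : IntegrableOn (fun t => C * t ^ (-p⁻¹)) (Ioc (0:ℝ) M) := by
    exact ((intervalIntegral.intervalIntegrable_rpow' hr (a := (0:ℝ)) (b := M)).1).const_mul C
  have step : ∫ t in Ioc (0:ℝ) M, ((volume.restrict (Ioc (0:ℝ) 1)) {a | t ≤ f a}).toReal
      ≤ ∫ t in Ioc (0:ℝ) M, C * t ^ (-p⁻¹) := by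
    refine integral_mono_of_nonneg ?_ hgint ?_
    · exact Filter.Eventually.of_forall fun t => ENNReal.toReal_nonneg
    · rw [Filter.EventuallyLE, ae_restrict_iff' measurableSet_Ioc]
      exact Filter.Eventually.of_forall tail_bound
  refine step.trans ?_
  have hcalc : ∫ t in Ioc (0:ℝ) M, C * t ^ (-p⁻¹)
      = C * (M ^ (-p⁻¹ + 1) / (-p⁻¹ + 1)) := by
    rw [← intervalIntegral.integral_of_le hM.le, intervalIntegral.integral_const_mul,
      integral_rpow (Or.inl hr)]
    rw [Real.zero_rpow (by linarith : (0:ℝ) < -p⁻¹ + 1).ne']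
    ring
  rw [hcalc]
  have hMpow : M ^ (-p⁻¹ + 1) = Δstar ^ (-(p - 1)) := by
    rw [hMdef, ← Real.rpow_mul hΔstar.le]
    congr 1
    field_simp
    ring
  rw [hMpow]
  have h1 : (-p⁻¹ + 1) = (p-1)/p := by field_simp; ring
  rw [h1]
  apply le_of_eq
  rw [div_div_eq_mul_div, div_mul_eq_mul_div]
  field_simp
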